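/- For w_t = t^γ with γ > -1 and any integer r > 0, the sequence (-log Δ)^r w_t^#, i.e., the sequence whose t-th term is Σ over compositions given by the coefficients of (-log(1-s))^r applied to the truncated sequence, satisfies (-log Δ)^r w_t^# ∼ (log t)^r t^γ as t → ∞. -/

import Mathlib

open Filter Finset

/-- Coefficients of `-log(1-s) = Σ_{j≥1} s^j/j`. -/
noncomputable def harmCoef : ℕ → ℝ
  | 0 => 0
  | j + 1 => 1 / ((j : ℝ) + 1)

/-- Coefficient of `s^j` in `(-log(1-s))^r`, defined by `r`-fold convolution. -/
noncomputable def logCoef : ℕ → ℕ → ℝ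
  | 0, 0 => 1
  | 0, _ + 1 => 0
  | r + 1, j => ∑ k ∈ Finset.range (j + 1), harmCoef k * logCoef r (j - k)

lemma harmCoef_nonneg (j : ℕ) : 0 ≤ harmCoef j := by
  cases j with
  | zero => simp [harmCoef]
  | succ n => simp only [harmCoef]; positivity

lemma harmCoef_eq (j : ℕ) (hj : 1 ≤ j) : harmCoef j = 1 / (j : ℝ) := by
  cases j with
  | zero => omega
  | succ n => simp [harmCoef]

lemma logCoef_nonneg (r j : ℕ) : 0 ≤ logCoef r j := by
  induction r generalizing j with
  | zero => cases j <;> simp [logCoef]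
  | succ r ih =>
      rw [logCoef]
      exact Finset.sum_nonneg fun k _ => mul_nonneg (harmCoef_nonneg k) (ih _)

lemma logCoef_zero (j : ℕ) : logCoef 0 j = if j = 0 then 1 else 0 := by
  cases j <;> simp [logCoef]

lemma logCoef_one (j : ℕ) : logCoef 1 j = harmCoef j := by
  rw [logCoef]
  rw [Finset.sum_eq_single j]
  · simp [logCoef_zero]
  · intro k hk hkj
    rw [logCoef_zero, if_neg (by simp at hk; omega), mul_zero]
  · simp

-- harmonic bounds
lemma harm_upper (n : ℕ) (hn : 1 ≤ n) : ∑ k ∈ Finset.Icc 1 n, (1:ℝ)/k ≤ 1 + Real.log n := by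
  induction n with
  | zero => omega
  | succ m ih =>
      rcases Nat.eq_or_lt_of_le hn with h | h
      · simp [← h]
      · have hm : 1 ≤ m := by omega
        rw [Finset.sum_Icc_succ_top (by omega)]
        have key : (1:ℝ)/(m+1) ≤ Real.log (m+1) - Real.log m := by
          have hmpos : (0:ℝ) < m := by exact_mod_cast hm
          rw [← Real.log_div (by positivity) (by positivity)]
          have h1 : Real.log ((m:ℝ)/(m+1)) ≤ (m:ℝ)/(m+1) - 1 :=
            Real.log_le_sub_one_of_pos (by positivity)
          have h2 : (m:ℝ)/(m+1) - 1 = -(1/(m+1)) := by field_simp; ring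
          have := Real.log_div (x := (m:ℝ)+1) (y := (m:ℝ)) (by positivity) (by positivity)
          nlinarith [Real.log_div (x := (m:ℝ)) (y := (m:ℝ)+1) (by positivity : (m:ℝ) ≠ 0) (by positivity : (m:ℝ)+1 ≠ 0)]
        have := ih hm
        push_cast
        push_cast at this key
        linarith
lemma harm_lower (n : ℕ) : Real.log (n+1) ≤ ∑ k ∈ Finset.Icc 1 n, (1:ℝ)/k := by
  induction n with
  | zero => simp
  | succ m ih =>
      rw [Finset.sum_Icc_succ_top (by omega)]
      have key : Real.log (m+1+1) - Real.log (m+1) ≤ (1:ℝ)/(m+1) := by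
        rw [← Real.log_div (by positivity) (by positivity)]
        have h1 : Real.log (((m:ℝ)+1+1)/((m:ℝ)+1)) ≤ ((m:ℝ)+1+1)/((m:ℝ)+1) - 1 :=
          Real.log_le_sub_one_of_pos (by positivity)
        have h2 : ((m:ℝ)+1+1)/((m:ℝ)+1) - 1 = 1/((m:ℝ)+1) := by field_simp; ring
        linarith
      push_cast
      push_cast at key ih
      linarith


lemma sum_rpow_le (γ : ℝ) (hγ : -1 < γ) :
    ∃ C : ℝ, 0 < C ∧ ∀ n : ℕ, ∑ m ∈ Finset.Icc 1 n, (m:ℝ)^γ ≤ C * (n:ℝ)^(γ+1) := by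
  rcases le_or_gt γ 0 with hγ0 | hγ0
  · refine ⟨1/(γ+1), div_pos one_pos (by linarith), fun n => ?_⟩
    rw [div_mul_eq_mul_div, one_mul, le_div_iff₀ (by linarith)]
    induction n with
    | zero => simp [Real.rpow_nonneg]
    | succ m ih =>
        rw [Finset.sum_Icc_succ_top (by omega)]
        have hm1 : (0:ℝ) < (m:ℝ) + 1 := by positivity
        have key : ((m:ℝ))^(γ+1) + (γ+1) * ((m:ℝ)+1)^γ ≤ ((m:ℝ)+1)^(γ+1) := by
          have hb := rpow_one_add_le_one_add_mul_self
            (s := -(1/((m:ℝ)+1))) (p := γ+1)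
            (by rw [neg_le, neg_neg]; rw [div_le_one hm1]; linarith)
            (by linarith) (by linarith)
          have h1 : (1 + -(1/((m:ℝ)+1))) = (m:ℝ)/((m:ℝ)+1) := by field_simp; ring
          rw [h1] at hb
          have h2 : ((m:ℝ)/((m:ℝ)+1))^(γ+1) = (m:ℝ)^(γ+1) / ((m:ℝ)+1)^(γ+1) :=
            Real.div_rpow (by positivity) (by positivity) _
          rw [h2, div_le_iff₀ (by positivity)] at hb
          have h3 : (1 + (γ+1) * -(1/((m:ℝ)+1))) * ((m:ℝ)+1)^(γ+1)
              = ((m:ℝ)+1)^(γ+1) - (γ+1) * (((m:ℝ)+1)^(γ+1) / ((m:ℝ)+1)) := by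
            field_simp; ring
          have h4 : ((m:ℝ)+1)^(γ+1) / ((m:ℝ)+1) = ((m:ℝ)+1)^γ := by
            rw [eq_comm, eq_div_iff (by positivity), ← Real.rpow_add_one (by positivity)]
          rw [h3, h4] at hb
          linarith
        push_cast
        push_cast at ih key
        nlinarith
  · refine ⟨1, one_pos, fun n => ?_⟩
    rw [one_mul]
    cases n with
    | zero => simp [Real.rpow_nonneg]
    | succ m =>
        calc ∑ k ∈ Finset.Icc 1 (m+1), (k:ℝ)^γ
            ≤ ∑ k ∈ Finset.Icc 1 (m+1), ((m+1:ℕ):ℝ)^γ := by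
              apply Finset.sum_le_sum
              intro k hk
              simp only [Finset.mem_Icc] at hk
              apply Real.rpow_le_rpow (by positivity) (by exact_mod_cast hk.2) (le_of_lt hγ0)
          _ = (m+1) * ((m+1:ℕ):ℝ)^γ := by
              rw [Finset.sum_const, Nat.card_Icc]; push_cast; ring
          _ = ((m+1:ℕ):ℝ)^(γ+1) := by
              rw [Real.rpow_add_one (by positivity)]; push_cast; ring





noncomputable def Aa (γ : ℝ) (r t : ℕ) : ℝ :=
  ∑ j ∈ Finset.range t, logCoef r j * ((t:ℝ) - j) ^ γ


lemma Aa_zero (γ : ℝ) (m : ℕ) (hm : 1 ≤ m) : Aa γ 0 m = (m:ℝ) ^ γ := by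
  rw [Aa, Finset.sum_eq_single 0]
  · simp [logCoef_zero]
  · intro j hj hj0
    rw [logCoef_zero, if_neg hj0, zero_mul]
  · intro h; simp at h; omega

lemma Aa_succ (γ : ℝ) (r t : ℕ) :
    Aa γ (r+1) t = ∑ k ∈ Finset.Ico 1 t, Aa γ r (t-k) / k := by
  unfold Aa
  simp only [logCoef, Finset.sum_mul]
  rw [Finset.sum_comm' (t' := Finset.range t) (s' := fun k => Finset.Ico k t)
    (by intro k j; simp [Finset.mem_range, Finset.mem_Ico]; omega)]
  rcases Nat.eq_zero_or_pos t with rfl | ht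
  · simp
  rw [Finset.range_eq_Ico, Finset.sum_eq_sum_Ico_succ_bot (by omega : 0 < t)]
  simp only [show harmCoef 0 = 0 from rfl, zero_mul, Finset.sum_const_zero, zero_add]
  apply Finset.sum_congr rfl
  intro k hk
  simp only [Finset.mem_Ico] at hk
  rw [Finset.sum_Ico_eq_sum_range]
  rw [Finset.sum_div]
  apply Finset.sum_congr rfl
  intro i hi
  simp only [Finset.mem_range] at hi
  rw [harmCoef_eq k hk.1]
  have h1 : k + i - k = i := by omega
  have h2 : ((t - k : ℕ) : ℝ) - i = (t:ℝ) - (k + i : ℕ) := by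
    have : (k:ℕ) ≤ t := le_of_lt hk.2
    push_cast [Nat.cast_sub this]
    ring
  rw [h1, h2]
  field_simp


-- preliminary tendsto facts
lemma logt_atTop : Tendsto (fun t : ℕ => Real.log t) atTop atTop :=
  Real.tendsto_log_atTop.comp tendsto_natCast_atTop_atTop

lemma rpow_cast_atTop {β : ℝ} (hβ : 0 < β) : Tendsto (fun t : ℕ => (t:ℝ) ^ β) atTop atTop :=
  (tendsto_rpow_atTop hβ).comp tendsto_natCast_atTop_atTop

lemma one_sub_inv_rpow_tendsto (γ : ℝ) :
    Tendsto (fun A : ℕ => (1 - (A:ℝ)⁻¹) ^ γ) atTop (nhds 1) := by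
  have h1 : Tendsto (fun A : ℕ => 1 - (A:ℝ)⁻¹) atTop (nhds 1) := by
    have := (tendsto_inv_atTop_zero).comp (tendsto_natCast_atTop_atTop (R := ℝ))
    simpa using (tendsto_const_nhds (x := (1:ℝ))).sub this
  have h2 : ContinuousAt (fun x : ℝ => x ^ γ) 1 :=
    Real.continuousAt_rpow_const 1 γ (Or.inl one_ne_zero)
  have := h2.tendsto.comp h1
  simpa [Function.comp_def] using this

lemma log_ratio_tendsto (c : ℝ) :
    Tendsto (fun t : ℕ => (Real.log t - c) / Real.log t) atTop (nhds 1) := by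
  have h0 : Tendsto (fun t : ℕ => c / Real.log t) atTop (nhds 0) :=
    Tendsto.div_atTop tendsto_const_nhds logt_atTop
  have h1 : Tendsto (fun t : ℕ => 1 - c / Real.log t) atTop (nhds 1) := by
    simpa using (tendsto_const_nhds (x := (1:ℝ))).sub h0
  apply h1.congr'
  filter_upwards [logt_atTop.eventually_gt_atTop 0] with t ht
  field_simp

set_option maxHeartbeats 1600000 in
lemma key (γ : ℝ) (hγ : -1 < γ) (ρ : ℕ) (f : ℕ → ℝ) (hf0 : ∀ m, 0 ≤ f m)
    (hC : ∃ Cγ : ℝ, 0 < Cγ ∧ ∀ n : ℕ, ∑ m ∈ Finset.Icc 1 n, (m:ℝ)^γ ≤ Cγ * (n:ℝ)^(γ+1))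
    (hH : ∀ n : ℕ, 1 ≤ n → ∑ k ∈ Finset.Icc 1 n, (1:ℝ)/k ≤ 1 + Real.log n)
    (hHl : ∀ n : ℕ, Real.log (n+1) ≤ ∑ k ∈ Finset.Icc 1 n, (1:ℝ)/k)
    (hf : Tendsto (fun m : ℕ => f m / (Real.log m ^ ρ * (m:ℝ) ^ γ)) atTop (nhds 1)) :
    Tendsto (fun t : ℕ => (∑ k ∈ Finset.Ico 1 t, f (t - k) / k)
      / (Real.log t ^ (ρ+1) * (t:ℝ) ^ γ)) atTop (nhds 1) := by
  obtain ⟨Cγ, hCγ, hCsum⟩ := hC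
  rw [Metric.tendsto_atTop]
  intro ε hε
  set ε₁ : ℝ := min ε 1 / 4 with hε₁def
  have hε₁pos : 0 < ε₁ := by positivity
  have hε₁ε : 4 * ε₁ ≤ ε := by
    have : min ε 1 ≤ ε := min_le_left _ _
    simp only [hε₁def]; linarith
  have hε₁1 : ε₁ ≤ 1/4 := by
    have : min ε 1 ≤ 1 := min_le_right _ _
    simp only [hε₁def]; linarith
  -- choose A
  obtain ⟨A, hA⟩ := ((one_sub_inv_rpow_tendsto γ).eventually
    (Metric.ball_mem_nhds 1 hε₁pos)).and (eventually_ge_atTop 2) |>.exists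
  obtain ⟨hAball, hA2⟩ := hA
  rw [Real.dist_eq] at hAball
  set q : ℝ := (1 - (A:ℝ)⁻¹) ^ γ with hq
  have hq1 : |q - 1| < ε₁ := hAball
  set cA : ℝ := max 1 q with hcA
  set cA' : ℝ := min 1 q with hcA'
  have hcAle : cA ≤ 1 + ε₁ := by
    rcases abs_lt.1 hq1 with ⟨h1, h2⟩
    simp only [hcA, max_le_iff]; constructor <;> linarith
  have hcA'ge : 1 - ε₁ ≤ cA' := by
    rcases abs_lt.1 hq1 with ⟨h1, h2⟩
    simp only [hcA', le_min_iff]; constructor <;> linarith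
  -- threshold M from hf
  rw [Metric.tendsto_atTop] at hf
  obtain ⟨M₀, hM₀⟩ := hf ε₁ hε₁pos
  set M : ℕ := max M₀ 2 with hM
  have hfM : ∀ m : ℕ, M ≤ m →
      (1 - ε₁) * (Real.log m ^ ρ * (m:ℝ)^γ) ≤ f m ∧
      f m ≤ (1 + ε₁) * (Real.log m ^ ρ * (m:ℝ)^γ) := by
    intro m hm
    have hm2 : (2:ℝ) ≤ (m:ℝ) := by
      have : 2 ≤ m := le_trans (le_max_right _ _) hm
      exact_mod_cast this
    have hlog : 0 < Real.log m := Real.log_pos (by linarith)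
    have hD : 0 < Real.log m ^ ρ * (m:ℝ)^γ := by
      apply mul_pos (pow_pos hlog ρ) (Real.rpow_pos_of_pos (by linarith) γ)
    have := hM₀ m (le_trans (le_max_left _ _) hm)
    rw [Real.dist_eq, abs_lt] at this
    have hr1 : 1 - ε₁ ≤ f m / (Real.log m ^ ρ * (m:ℝ)^γ) := by linarith [this.1]
    have hr2 : f m / (Real.log m ^ ρ * (m:ℝ)^γ) ≤ 1 + ε₁ := by linarith [this.2]
    have heq : f m / (Real.log m ^ ρ * (m:ℝ)^γ) * (Real.log m ^ ρ * (m:ℝ)^γ) = f m :=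
      div_mul_cancel₀ _ (ne_of_gt hD)
    constructor
    · calc (1-ε₁) * (Real.log m ^ ρ * (m:ℝ)^γ)
          ≤ f m / (Real.log m ^ ρ * (m:ℝ)^γ) * (Real.log m ^ ρ * (m:ℝ)^γ) :=
            mul_le_mul_of_nonneg_right hr1 hD.le
        _ = f m := heq
    · calc f m = f m / (Real.log m ^ ρ * (m:ℝ)^γ) * (Real.log m ^ ρ * (m:ℝ)^γ) := heq.symm
        _ ≤ (1+ε₁) * (Real.log m ^ ρ * (m:ℝ)^γ) := mul_le_mul_of_nonneg_right hr2 hD.le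
  set C₀ : ℝ := ∑ m ∈ Finset.Ico 1 M, f m with hC₀
  have hC₀nn : 0 ≤ C₀ := Finset.sum_nonneg fun m _ => hf0 m
  -- the two eventual bounds
  have upper : ∀ᶠ t : ℕ in atTop,
      (∑ k ∈ Finset.Ico 1 t, f (t - k) / k) ≤
        (1+ε₁) * cA * (Real.log t ^ ρ * (t:ℝ)^γ) * (1 + Real.log t)
        + (A:ℝ)/t * (C₀ + (1+ε₁) * Cγ * Real.log t ^ ρ * (t:ℝ)^(γ+1)) := by
    filter_upwards [eventually_ge_atTop (2*M + 2*A + 4)] with t ht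
    have hA0 : 0 < A := by omega
    have ht2 : 2 ≤ t := by omega
    have htA : A ≤ t := by omega
    have ht2M : 2*M ≤ t := by omega
    have htR : (2:ℝ) ≤ (t:ℝ) := by exact_mod_cast ht2
    have htpos : (0:ℝ) < t := by linarith
    have hAR : (2:ℝ) ≤ (A:ℝ) := by exact_mod_cast hA2
    have hlogt : 0 < Real.log t := Real.log_pos (by linarith)
    set K := t / A with hK
    have hK1 : 1 ≤ K := (Nat.one_le_div_iff hA0).mpr htA
    have hKlt : K < t := Nat.lt_of_le_of_lt (Nat.div_le_div_left hA2 (by omega))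
      (Nat.div_lt_self (by omega) one_lt_two)
    have hKAle : (K:ℝ) * A ≤ t := by exact_mod_cast Nat.div_mul_le_self t A
    have htlt : (t:ℝ) < ((K:ℝ) + 1) * A := by
      have h1 : A * K + t % A = t := Nat.div_add_mod t A
      have h2 : t % A < A := Nat.mod_lt t hA0
      have h3 : t < A * K + A := by omega
      have h4 : (t:ℝ) < (A:ℝ) * K + A := by exact_mod_cast h3
      linarith [h4, show ((K:ℝ)+1)*A = (A:ℝ)*K + A from by ring]
    have hKr : (K:ℝ) ≤ (t:ℝ) / A := by
      rw [le_div_iff₀ (by linarith)]; exact hKAle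
    -- split the sum
    rw [← Finset.sum_Ico_consecutive (fun k => f (t-k)/(k:ℝ))
      (show 1 ≤ K+1 by omega) (show K+1 ≤ t by omega)]
    have hbase : (0:ℝ) < 1 - (A:ℝ)⁻¹ := by
      have : (A:ℝ)⁻¹ ≤ 1/2 := by
        rw [inv_eq_one_div]
        apply div_le_div_of_nonneg_left (by norm_num) (by norm_num) hAR
      linarith
    have hqpos : 0 < q := Real.rpow_pos_of_pos hbase γ
    have hcApos : 0 < cA := lt_of_lt_of_le one_pos (le_max_left _ _)
    have htg : (0:ℝ) < (t:ℝ)^γ := Real.rpow_pos_of_pos htpos γ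
    -- bounds valid for k in the first range
    have hS1 : ∑ k ∈ Finset.Ico 1 (K+1), f (t-k)/(k:ℝ) ≤
        (1+ε₁) * cA * (Real.log t ^ ρ * (t:ℝ)^γ) * (1 + Real.log t) := by
      have hterm : ∀ k ∈ Finset.Ico 1 (K+1), f (t-k)/(k:ℝ) ≤
          ((1+ε₁) * cA * (Real.log t ^ ρ * (t:ℝ)^γ)) * (1/(k:ℝ)) := by
        intro k hk
        simp only [Finset.mem_Ico] at hk
        obtain ⟨hk1, hk2⟩ := hk
        have hkK : k ≤ K := by omega
        have hkt : k ≤ t := by omega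
        have hmcast : ((t - k : ℕ):ℝ) = (t:ℝ) - k := by
          push_cast [Nat.cast_sub hkt]; ring
        have hkrle : (k:ℝ) ≤ (t:ℝ)/A := le_trans (by exact_mod_cast hkK) hKr
        have hmlb : (t:ℝ) * (1 - (A:ℝ)⁻¹) ≤ ((t - k : ℕ):ℝ) := by
          rw [hmcast, mul_sub, mul_one, ← div_eq_mul_inv]
          linarith
        have hAhalf : (A:ℝ)⁻¹ ≤ 1/2 := by
          rw [inv_eq_one_div]
          exact div_le_div_of_nonneg_left (by norm_num) (by norm_num) hAR
        have hmhalf : (t:ℝ)/2 ≤ ((t - k : ℕ):ℝ) := by nlinarith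
        have hmM : M ≤ t - k := by
          have h2M : (2:ℝ)*M ≤ t := by exact_mod_cast ht2M
          have : (M:ℝ) ≤ ((t - k : ℕ):ℝ) := by linarith
          exact_mod_cast this
        have hm1 : (1:ℝ) ≤ ((t - k : ℕ):ℝ) := by linarith
        have hmpos : (0:ℝ) < ((t - k : ℕ):ℝ) := by linarith
        have hknn : (0:ℝ) ≤ (k:ℝ) := by positivity
        have hmle : ((t - k : ℕ):ℝ) ≤ (t:ℝ) := by rw [hmcast]; linarith
        have hfb := (hfM (t-k) hmM).2
        have hlogm : Real.log ((t - k : ℕ):ℝ) ^ ρ ≤ Real.log t ^ ρ :=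
          pow_le_pow_left₀ (Real.log_nonneg hm1) (Real.log_le_log hmpos hmle) ρ
        have hmg : ((t - k : ℕ):ℝ)^γ ≤ cA * (t:ℝ)^γ := by
          rcases le_or_gt 0 γ with hg | hg
          · calc ((t - k : ℕ):ℝ)^γ ≤ (t:ℝ)^γ := Real.rpow_le_rpow hmpos.le hmle hg
              _ ≤ cA * (t:ℝ)^γ := le_mul_of_one_le_left htg.le (le_max_left _ _)
          · calc ((t - k : ℕ):ℝ)^γ ≤ ((t:ℝ) * (1 - (A:ℝ)⁻¹))^γ :=
                Real.rpow_le_rpow_of_nonpos (by positivity) hmlb hg.le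
              _ = (t:ℝ)^γ * q := by rw [Real.mul_rpow htpos.le hbase.le]
              _ ≤ cA * (t:ℝ)^γ := by
                  rw [mul_comm]
                  exact mul_le_mul_of_nonneg_right (le_max_right _ _) htg.le
        have hfb2 : f (t-k) ≤ (1+ε₁) * cA * (Real.log t ^ ρ * (t:ℝ)^γ) := by
          have h0 : Real.log ((t - k : ℕ):ℝ)^ρ * ((t - k : ℕ):ℝ)^γ
              ≤ Real.log t ^ ρ * (cA * (t:ℝ)^γ) :=
            mul_le_mul hlogm hmg (Real.rpow_nonneg hmpos.le γ) (by positivity)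
          calc f (t-k) ≤ (1+ε₁) * (Real.log ((t - k : ℕ):ℝ)^ρ * ((t - k : ℕ):ℝ)^γ) := hfb
            _ ≤ (1+ε₁) * (Real.log t ^ ρ * (cA * (t:ℝ)^γ)) :=
                mul_le_mul_of_nonneg_left h0 (by linarith)
            _ = (1+ε₁) * cA * (Real.log t ^ ρ * (t:ℝ)^γ) := by ring
        rw [div_eq_mul_one_div]
        exact mul_le_mul_of_nonneg_right hfb2 (by positivity)
      calc ∑ k ∈ Finset.Ico 1 (K+1), f (t-k)/(k:ℝ)
          ≤ ∑ k ∈ Finset.Ico 1 (K+1), ((1+ε₁) * cA * (Real.log t ^ ρ * (t:ℝ)^γ)) * (1/(k:ℝ)) :=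
            Finset.sum_le_sum hterm
        _ = ((1+ε₁) * cA * (Real.log t ^ ρ * (t:ℝ)^γ))
            * ∑ k ∈ Finset.Ico 1 (K+1), 1/(k:ℝ) := by rw [← Finset.mul_sum]
        _ ≤ ((1+ε₁) * cA * (Real.log t ^ ρ * (t:ℝ)^γ)) * (1 + Real.log t) := by
            apply mul_le_mul_of_nonneg_left _ (by positivity)
            rw [Finset.Ico_add_one_right_eq_Icc]
            calc ∑ k ∈ Finset.Icc 1 K, 1/(k:ℝ) ≤ 1 + Real.log K := hH K hK1
              _ ≤ 1 + Real.log t := by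
                  have : (K:ℝ) ≤ (t:ℝ) := by exact_mod_cast hKlt.le
                  have hKpos : (0:ℝ) < K := by exact_mod_cast hK1
                  linarith [Real.log_le_log hKpos this]
    have hS2 : ∑ k ∈ Finset.Ico (K+1) t, f (t-k)/(k:ℝ) ≤
        (A:ℝ)/t * (C₀ + (1+ε₁) * Cγ * Real.log t ^ ρ * (t:ℝ)^(γ+1)) := by
      have hstep1 : ∀ k ∈ Finset.Ico (K+1) t, f (t-k)/(k:ℝ) ≤ (A:ℝ)/t * f (t-k) := by
        intro k hk
        simp only [Finset.mem_Ico] at hk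
        have hkpos : (0:ℝ) < k := by
          have : 0 < k := by omega
          exact_mod_cast this
        have hkge : (t:ℝ) ≤ (A:ℝ) * k := by
          have hKk : (K:ℝ)+1 ≤ k := by exact_mod_cast hk.1
          nlinarith [htlt]
        rw [div_eq_mul_one_div, mul_comm ((A:ℝ)/t) (f (t-k))]
        apply mul_le_mul_of_nonneg_left _ (hf0 _)
        rw [div_le_div_iff₀ hkpos htpos]
        nlinarith
      calc ∑ k ∈ Finset.Ico (K+1) t, f (t-k)/(k:ℝ)
          ≤ ∑ k ∈ Finset.Ico (K+1) t, (A:ℝ)/t * f (t-k) := Finset.sum_le_sum hstep1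
        _ = (A:ℝ)/t * ∑ k ∈ Finset.Ico (K+1) t, f (t-k) := by rw [← Finset.mul_sum]
        _ ≤ (A:ℝ)/t * (C₀ + (1+ε₁) * Cγ * Real.log t ^ ρ * (t:ℝ)^(γ+1)) := by
            apply mul_le_mul_of_nonneg_left _ (by positivity)
            calc ∑ k ∈ Finset.Ico (K+1) t, f (t-k)
                ≤ ∑ k ∈ Finset.Ico 1 t, f (t-k) :=
                  Finset.sum_le_sum_of_subset_of_nonneg
                    (Finset.Ico_subset_Ico (by omega) le_rfl) (fun k _ _ => hf0 _)
              _ = ∑ m ∈ Finset.Ico 1 t, f m := by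
                  apply Finset.sum_nbij' (i := fun k => t - k) (j := fun m => t - m)
                  · intro a ha; simp only [Finset.mem_Ico] at *; omega
                  · intro a ha; simp only [Finset.mem_Ico] at *; omega
                  · intro a ha; simp only [Finset.mem_Ico] at ha; omega
                  · intro a ha; simp only [Finset.mem_Ico] at ha; omega
                  · intro a _; rfl
              _ = C₀ + ∑ m ∈ Finset.Ico M t, f m := by
                  rw [hC₀, ← Finset.sum_Ico_consecutive f
                    (show 1 ≤ M by omega) (show M ≤ t by omega)]
              _ ≤ C₀ + (1+ε₁) * Cγ * Real.log t ^ ρ * (t:ℝ)^(γ+1) := by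
                  have hsum1 : ∑ m ∈ Finset.Ico M t, f m
                      ≤ (1+ε₁) * Real.log t ^ ρ * ∑ m ∈ Finset.Ico M t, (m:ℝ)^γ := by
                    rw [Finset.mul_sum]
                    apply Finset.sum_le_sum
                    intro m hm
                    simp only [Finset.mem_Ico] at hm
                    have hm2 : (2:ℝ) ≤ (m:ℝ) := by
                      have : 2 ≤ m := le_trans (le_max_right _ _) hm.1
                      exact_mod_cast this
                    have hmle : (m:ℝ) ≤ (t:ℝ) := by exact_mod_cast hm.2.le
                    have hlogm : Real.log (m:ℝ) ^ ρ ≤ Real.log t ^ ρ :=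
                      pow_le_pow_left₀ (Real.log_nonneg (by linarith))
                        (Real.log_le_log (by linarith) hmle) ρ
                    calc f m ≤ (1+ε₁) * (Real.log m ^ ρ * (m:ℝ)^γ) := (hfM m hm.1).2
                      _ ≤ (1+ε₁) * Real.log t ^ ρ * (m:ℝ)^γ := by
                          have : Real.log m ^ ρ * (m:ℝ)^γ ≤ Real.log t ^ ρ * (m:ℝ)^γ :=
                            mul_le_mul_of_nonneg_right hlogm (Real.rpow_nonneg (by linarith) γ)
                          nlinarith [this]
                  have hsum2 : ∑ m ∈ Finset.Ico M t, (m:ℝ)^γ ≤ Cγ * (t:ℝ)^(γ+1) := by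
                    refine le_trans ?_ (hCsum t)
                    apply Finset.sum_le_sum_of_subset_of_nonneg
                    · intro a ha; simp only [Finset.mem_Ico, Finset.mem_Icc] at *; omega
                    · intro m _ _
                      exact Real.rpow_nonneg (by positivity) γ
                  have hnn : (0:ℝ) ≤ (1+ε₁) * Real.log t ^ ρ := by positivity
                  nlinarith [mul_le_mul_of_nonneg_left hsum2 hnn, hsum1]
    linarith

  have lower : ∀ᶠ t : ℕ in atTop,
      (1-ε₁) * cA' * ((Real.log t - Real.log 2) ^ ρ * (t:ℝ)^γ) * (Real.log t - Real.log A)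
        ≤ (∑ k ∈ Finset.Ico 1 t, f (t - k) / k) := by
    filter_upwards [eventually_ge_atTop (2*M + 2*A + 4)] with t ht
    have hA0 : 0 < A := by omega
    have ht2 : 2 ≤ t := by omega
    have htA : A ≤ t := by omega
    have ht2M : 2*M ≤ t := by omega
    have htR : (2:ℝ) ≤ (t:ℝ) := by exact_mod_cast ht2
    have htpos : (0:ℝ) < t := by linarith
    have hAR : (2:ℝ) ≤ (A:ℝ) := by exact_mod_cast hA2
    have hAposR : (0:ℝ) < A := by linarith
    have hlogt : 0 < Real.log t := Real.log_pos (by linarith)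
    set K := t / A with hK
    have hK1 : 1 ≤ K := (Nat.one_le_div_iff hA0).mpr htA
    have hKlt : K < t := Nat.lt_of_le_of_lt (Nat.div_le_div_left hA2 (by omega))
      (Nat.div_lt_self (by omega) one_lt_two)
    have hKAle : (K:ℝ) * A ≤ t := by exact_mod_cast Nat.div_mul_le_self t A
    have htlt : (t:ℝ) < ((K:ℝ) + 1) * A := by
      have h1 : A * K + t % A = t := Nat.div_add_mod t A
      have h2 : t % A < A := Nat.mod_lt t hA0
      have h3 : t < A * K + A := by omega
      have h4 : (t:ℝ) < (A:ℝ) * K + A := by exact_mod_cast h3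
      linarith [h4, show ((K:ℝ)+1)*A = (A:ℝ)*K + A from by ring]
    have hKr : (K:ℝ) ≤ (t:ℝ) / A := by
      rw [le_div_iff₀ (by linarith)]; exact hKAle
    have hbase : (0:ℝ) < 1 - (A:ℝ)⁻¹ := by
      have : (A:ℝ)⁻¹ ≤ 1/2 := by
        rw [inv_eq_one_div]
        apply div_le_div_of_nonneg_left (by norm_num) (by norm_num) hAR
      linarith
    have hqpos : 0 < q := Real.rpow_pos_of_pos hbase γ
    have hcA'pos : 0 < cA' := lt_of_lt_of_le (by linarith) hcA'ge
    have htg : (0:ℝ) < (t:ℝ)^γ := Real.rpow_pos_of_pos htpos γ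
    have hlog2nn : 0 ≤ Real.log t - Real.log 2 := by
      linarith [Real.log_le_log two_pos htR]
    set c : ℝ := (1-ε₁) * cA' * ((Real.log t - Real.log 2) ^ ρ * (t:ℝ)^γ) with hc
    have hcnn : 0 ≤ c := by
      apply mul_nonneg (mul_nonneg (by linarith) hcA'pos.le)
      exact mul_nonneg (pow_nonneg hlog2nn ρ) htg.le
    have hterm : ∀ k ∈ Finset.Ico 1 (K+1), c * (1/(k:ℝ)) ≤ f (t-k)/(k:ℝ) := by
      intro k hk
      simp only [Finset.mem_Ico] at hk
      obtain ⟨hk1, hk2⟩ := hk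
      have hkK : k ≤ K := by omega
      have hkt : k ≤ t := by omega
      have hmcast : ((t - k : ℕ):ℝ) = (t:ℝ) - k := by
        push_cast [Nat.cast_sub hkt]; ring
      have hkrle : (k:ℝ) ≤ (t:ℝ)/A := le_trans (by exact_mod_cast hkK) hKr
      have hmlb : (t:ℝ) * (1 - (A:ℝ)⁻¹) ≤ ((t - k : ℕ):ℝ) := by
        rw [hmcast, mul_sub, mul_one, ← div_eq_mul_inv]
        linarith
      have hAhalf : (A:ℝ)⁻¹ ≤ 1/2 := by
        rw [inv_eq_one_div]
        exact div_le_div_of_nonneg_left (by norm_num) (by norm_num) hAR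
      have hmhalf : (t:ℝ)/2 ≤ ((t - k : ℕ):ℝ) := by nlinarith
      have hmM : M ≤ t - k := by
        have h2M : (2:ℝ)*M ≤ t := by exact_mod_cast ht2M
        have : (M:ℝ) ≤ ((t - k : ℕ):ℝ) := by linarith
        exact_mod_cast this
      have hm1 : (1:ℝ) ≤ ((t - k : ℕ):ℝ) := by linarith
      have hmpos : (0:ℝ) < ((t - k : ℕ):ℝ) := by linarith
      have hknn : (0:ℝ) ≤ (k:ℝ) := by positivity
      have hmle : ((t - k : ℕ):ℝ) ≤ (t:ℝ) := by rw [hmcast]; linarith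
      have hfb := (hfM (t-k) hmM).1
      have hlogm : (Real.log t - Real.log 2) ^ ρ ≤ Real.log ((t - k : ℕ):ℝ) ^ ρ := by
        apply pow_le_pow_left₀ hlog2nn
        have h1 : Real.log ((t:ℝ)/2) ≤ Real.log ((t - k : ℕ):ℝ) :=
          Real.log_le_log (by linarith) hmhalf
        rwa [Real.log_div (by linarith) (by norm_num)] at h1
      have hmg : cA' * (t:ℝ)^γ ≤ ((t - k : ℕ):ℝ)^γ := by
        rcases le_or_gt 0 γ with hg | hg
        · calc cA' * (t:ℝ)^γ ≤ q * (t:ℝ)^γ :=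
              mul_le_mul_of_nonneg_right (min_le_right _ _) htg.le
            _ = ((t:ℝ) * (1 - (A:ℝ)⁻¹))^γ := by
                rw [Real.mul_rpow htpos.le hbase.le]; ring
            _ ≤ ((t - k : ℕ):ℝ)^γ := Real.rpow_le_rpow (by positivity) hmlb hg
        · calc cA' * (t:ℝ)^γ ≤ 1 * (t:ℝ)^γ :=
              mul_le_mul_of_nonneg_right (min_le_left _ _) htg.le
            _ = (t:ℝ)^γ := one_mul _
            _ ≤ ((t - k : ℕ):ℝ)^γ := Real.rpow_le_rpow_of_nonpos hmpos hmle hg.le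
      have hfb2 : c ≤ f (t-k) := by
        have h0 : (Real.log t - Real.log 2) ^ ρ * (cA' * (t:ℝ)^γ)
            ≤ Real.log ((t - k : ℕ):ℝ)^ρ * ((t - k : ℕ):ℝ)^γ :=
          mul_le_mul hlogm hmg (by positivity) (by positivity)
        calc c = (1-ε₁) * ((Real.log t - Real.log 2) ^ ρ * (cA' * (t:ℝ)^γ)) := by
              rw [hc]; ring
          _ ≤ (1-ε₁) * (Real.log ((t - k : ℕ):ℝ)^ρ * ((t - k : ℕ):ℝ)^γ) :=
              mul_le_mul_of_nonneg_left h0 (by linarith)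
          _ ≤ f (t-k) := hfb
      rw [div_eq_mul_one_div (f (t-k)) (k:ℝ)]
      exact mul_le_mul_of_nonneg_right hfb2 (one_div_nonneg.mpr (Nat.cast_nonneg k))
    have hHlow : Real.log t - Real.log A ≤ ∑ k ∈ Finset.Ico 1 (K+1), 1/(k:ℝ) := by
      rw [Finset.Ico_add_one_right_eq_Icc]
      refine le_trans ?_ (hHl K)
      have h1 : (t:ℝ)/A ≤ (K:ℝ)+1 := by
        rw [div_le_iff₀ (by linarith)]; linarith
      have h2 : Real.log ((t:ℝ)/A) ≤ Real.log ((K:ℝ)+1) :=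
        Real.log_le_log (by positivity) h1
      rwa [Real.log_div (by linarith) (by linarith)] at h2
    calc (1-ε₁) * cA' * ((Real.log t - Real.log 2) ^ ρ * (t:ℝ)^γ) * (Real.log t - Real.log A)
        = c * (Real.log t - Real.log A) := by rw [hc]
      _ ≤ c * ∑ k ∈ Finset.Ico 1 (K+1), 1/(k:ℝ) := mul_le_mul_of_nonneg_left hHlow hcnn
      _ = ∑ k ∈ Finset.Ico 1 (K+1), c * (1/(k:ℝ)) := Finset.mul_sum _ _ _
      _ ≤ ∑ k ∈ Finset.Ico 1 (K+1), f (t-k)/(k:ℝ) := Finset.sum_le_sum hterm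
      _ ≤ ∑ k ∈ Finset.Ico 1 t, f (t-k)/(k:ℝ) := by
          apply Finset.sum_le_sum_of_subset_of_nonneg
            (Finset.Ico_subset_Ico le_rfl (by omega))
          intro k hk _
          exact div_nonneg (hf0 _) (Nat.cast_nonneg k)
  -- limits of the bounds divided by D
  have Dpos : ∀ᶠ t : ℕ in atTop, 0 < Real.log t ^ (ρ+1) * (t:ℝ)^γ := by
    filter_upwards [eventually_ge_atTop 2] with t ht
    have ht2 : (2:ℝ) ≤ (t:ℝ) := by exact_mod_cast ht
    exact mul_pos (pow_pos (Real.log_pos (by linarith)) _)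
      (Real.rpow_pos_of_pos (by linarith) _)
  have hUlim : Tendsto (fun t : ℕ =>
      ((1+ε₁) * cA * (Real.log t ^ ρ * (t:ℝ)^γ) * (1 + Real.log t)
        + (A:ℝ)/t * (C₀ + (1+ε₁) * Cγ * Real.log t ^ ρ * (t:ℝ)^(γ+1)))
      / (Real.log t ^ (ρ+1) * (t:ℝ)^γ)) atTop (nhds ((1+ε₁) * cA)) := by
    have lim1 : Tendsto (fun t : ℕ => (1+ε₁) * cA * ((Real.log t - (-1)) / Real.log t)
        + (A:ℝ) * C₀ / (Real.log t ^ (ρ+1) * (t:ℝ)^(γ+1))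
        + (A:ℝ) * ((1+ε₁) * Cγ) / Real.log t) atTop
        (nhds ((1+ε₁) * cA * 1 + 0 + 0)) := by
      refine Tendsto.add (Tendsto.add ?_ ?_) ?_
      · exact tendsto_const_nhds.mul (log_ratio_tendsto (-1))
      · refine Tendsto.div_atTop tendsto_const_nhds ?_
        exact ((tendsto_pow_atTop (n := ρ+1) (by omega)).comp logt_atTop).atTop_mul_atTop₀ (rpow_cast_atTop (by linarith))
      · exact Tendsto.div_atTop tendsto_const_nhds logt_atTop
    rw [show (1+ε₁) * cA * 1 + 0 + 0 = (1+ε₁) * cA by ring] at lim1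
    apply lim1.congr'
    filter_upwards [eventually_ge_atTop 2] with t ht
    have ht2 : (2:ℝ) ≤ (t:ℝ) := by exact_mod_cast ht
    have htpos : (0:ℝ) < t := by linarith
    have hlog : 0 < Real.log t := Real.log_pos (by linarith)
    have hrp : (0:ℝ) < (t:ℝ)^γ := Real.rpow_pos_of_pos htpos γ
    rw [Real.rpow_add_one (ne_of_gt htpos)]
    rw [pow_succ]
    field_simp
    ring
  have hLlim : Tendsto (fun t : ℕ =>
      ((1-ε₁) * cA' * ((Real.log t - Real.log 2) ^ ρ * (t:ℝ)^γ) * (Real.log t - Real.log A))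
      / (Real.log t ^ (ρ+1) * (t:ℝ)^γ)) atTop (nhds ((1-ε₁) * cA')) := by
    have lim1 : Tendsto (fun t : ℕ => (1-ε₁) * cA'
        * ((Real.log t - Real.log 2) / Real.log t) ^ ρ
        * ((Real.log t - Real.log A) / Real.log t)) atTop
        (nhds ((1-ε₁) * cA' * 1 ^ ρ * 1)) := by
      exact (tendsto_const_nhds.mul ((log_ratio_tendsto (Real.log 2)).pow ρ)).mul
        (log_ratio_tendsto (Real.log A))
    rw [show (1-ε₁) * cA' * 1 ^ ρ * 1 = (1-ε₁) * cA' by ring] at lim1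
    apply lim1.congr'
    filter_upwards [eventually_ge_atTop 2] with t ht
    have ht2 : (2:ℝ) ≤ (t:ℝ) := by exact_mod_cast ht
    have htpos : (0:ℝ) < t := by linarith
    have hlog : 0 < Real.log t := Real.log_pos (by linarith)
    have hrp : (0:ℝ) < (t:ℝ)^γ := Real.rpow_pos_of_pos htpos γ
    rw [div_pow, pow_succ]
    field_simp
  -- combine
  have hub : (1+ε₁) * cA < 1 + ε := by nlinarith
  have hlb : 1 - ε < (1-ε₁) * cA' := by nlinarith
  have hU : ∀ᶠ t : ℕ in atTop,
      ((1+ε₁) * cA * (Real.log t ^ ρ * (t:ℝ)^γ) * (1 + Real.log t)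
        + (A:ℝ)/t * (C₀ + (1+ε₁) * Cγ * Real.log t ^ ρ * (t:ℝ)^(γ+1)))
      / (Real.log t ^ (ρ+1) * (t:ℝ)^γ) < 1 + ε := hUlim.eventually_lt_const hub
  have hL : ∀ᶠ t : ℕ in atTop, 1 - ε <
      ((1-ε₁) * cA' * ((Real.log t - Real.log 2) ^ ρ * (t:ℝ)^γ) * (Real.log t - Real.log A))
      / (Real.log t ^ (ρ+1) * (t:ℝ)^γ) := hLlim.eventually_const_lt hlb
  have final : ∀ᶠ t : ℕ in atTop,
      dist ((∑ k ∈ Finset.Ico 1 t, f (t - k) / k) / (Real.log t ^ (ρ+1) * (t:ℝ)^γ)) 1 < ε := by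
    filter_upwards [upper, lower, Dpos, hU, hL] with t hu hl hD hU' hL'
    rw [Real.dist_eq, abs_lt]
    have h1 : (∑ k ∈ Finset.Ico 1 t, f (t - k) / k) / (Real.log t ^ (ρ+1) * (t:ℝ)^γ)
        < 1 + ε := lt_of_le_of_lt ((div_le_div_iff_of_pos_right hD).mpr hu) hU'
    have h2 : 1 - ε <
        (∑ k ∈ Finset.Ico 1 t, f (t - k) / k) / (Real.log t ^ (ρ+1) * (t:ℝ)^γ) :=
      lt_of_lt_of_le hL' ((div_le_div_iff_of_pos_right hD).mpr hl)
    constructor <;> linarith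
  exact eventually_atTop.mp final


lemma Aa_nonneg (γ : ℝ) (r t : ℕ) : 0 ≤ Aa γ r t := by
  apply Finset.sum_nonneg
  intro j hj
  simp only [Finset.mem_range] at hj
  have : (0:ℝ) ≤ (t:ℝ) - j := by
    have : (j:ℝ) ≤ t := by exact_mod_cast hj.le
    linarith
  exact mul_nonneg (logCoef_nonneg r j) (Real.rpow_nonneg this γ)

open Filter in
lemma main_ind (γ : ℝ) (hγ : -1 < γ) : ∀ s : ℕ,
    Tendsto (fun t : ℕ => Aa γ (s+1) t / (Real.log t ^ (s+1) * (t:ℝ)^γ)) atTop (nhds 1) := by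
  intro s
  induction s with
  | zero =>
      have h := key γ hγ 0 (Aa γ 0) (Aa_nonneg γ 0) (sum_rpow_le γ hγ) harm_upper harm_lower ?_
      · apply h.congr'
        filter_upwards [eventually_ge_atTop 1] with t _
        rw [← Aa_succ]
      · apply (tendsto_const_nhds (x := (1:ℝ))).congr'
        filter_upwards [eventually_ge_atTop 1] with m hm
        have hmpos : (0:ℝ) < m := by exact_mod_cast hm
        rw [Aa_zero γ m hm, pow_zero, one_mul,
          div_self (ne_of_gt (Real.rpow_pos_of_pos hmpos γ))]
  | succ s ih =>
      have h := key γ hγ (s+1) (Aa γ (s+1)) (Aa_nonneg γ (s+1))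
        (sum_rpow_le γ hγ) harm_upper harm_lower ih
      apply h.congr'
      filter_upwards [eventually_ge_atTop 1] with t _
      rw [← Aa_succ]

open Filter in
theorem stmt4 (γ : ℝ) (hγ : -1 < γ) (r : ℕ) (hr : 0 < r) :
    Tendsto (fun t : ℕ =>
        (∑ j ∈ Finset.range t, logCoef r j * ((t : ℝ) - j) ^ γ)
          / (Real.log t ^ r * (t : ℝ) ^ γ)) atTop (nhds 1) := by
  obtain ⟨s, rfl⟩ : ∃ s, r = s + 1 := ⟨r - 1, by omega⟩
  exact main_ind γ hγ s
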